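/- Consider the quandle on {a,b,c,d} with matrix [a,a,a,a; b,b,d,c; c,d,c,b; d,c,b,d]. If ≤ is a compatible quasi-order and some two distinct elements of {b,c,d} are comparable, then b, c, d are all mutually ≤-equivalent. -/

import Mathlib

def CompatibleQuasiOrder {Q : Type*} (op : Q → Q → Q) (le : Q → Q → Prop) : Prop :=
  ∀ x x' y y' : Q, le x x' → le y y' → le (op x y) (op x' y')

def q4c : Fin 4 → Fin 4 → Fin 4 :=
  ![![0,0,0,0], ![1,1,3,2], ![2,3,2,1], ![3,2,1,3]]

theorem stmt_16 (le : Fin 4 → Fin 4 → Prop)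
    (hrefl : Reflexive le) (htrans : Transitive le)
    (hcomp : CompatibleQuasiOrder q4c le)
    (h : ∃ x y : Fin 4, x ≠ y ∧ x ∈ ({1,2,3} : Set (Fin 4)) ∧
        y ∈ ({1,2,3} : Set (Fin 4)) ∧ (le x y ∨ le y x)) :
    ∀ x ∈ ({1,2,3} : Set (Fin 4)), ∀ y ∈ ({1,2,3} : Set (Fin 4)), le x y := by
  have step : ∀ k i j : Fin 4, le i j → le (q4c k i) (q4c k j) :=
    fun k i j h => hcomp k k i j (hrefl k) h
  obtain ⟨a, b, hab, ha, hb, hle⟩ := h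
  have key : ∀ i j : Fin 4, le i j → i ≠ j →
      i ∈ ({1,2,3} : Set (Fin 4)) → j ∈ ({1,2,3} : Set (Fin 4)) →
      ∀ x ∈ ({1,2,3} : Set (Fin 4)), ∀ y ∈ ({1,2,3} : Set (Fin 4)), le x y := by
    intro i j hij hne hi hj x hx y hy
    have s1 := step 1 _ _ hij
    have s2 := step 2 _ _ hij
    have s3 := step 3 _ _ hij
    simp only [Set.mem_insert_iff, Set.mem_singleton_iff] at hi hj hx hy
    rcases hi with rfl|rfl|rfl <;> rcases hj with rfl|rfl|rfl <;>
      first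
        | exact absurd rfl hne
        | (simp only [q4c, Matrix.cons_val_zero, Matrix.cons_val_one, Matrix.head_cons,
              Matrix.cons_val_two, Matrix.tail_cons, Matrix.cons_val_three] at s1 s2 s3;
            rcases hx with rfl|rfl|rfl <;> rcases hy with rfl|rfl|rfl <;>
              solve_by_elim (maxDepth := 4) [htrans, hrefl])
  rcases hle with hle | hle
  · exact key a b hle hab ha hb
  · exact key b a hle hab.symm hb ha
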